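/- arXiv:2404.08476 — 3 statements merged into one kernel-verified Lean document; each statement's English description precedes it below -/
import Mathlib

section
/- Let Q be a finite nonempty subset of ℝ^d. Then there exist a unit vector u ∈ ℝ^d, a point q* ∈ Q, and T > 0 such that for all t ≥ T the point t·u has q* as its unique nearest point in Q. Consequently, for n ≥ 2 pairwise distinct sample points X_1, …, X_n with Q = {X_1,…,X_n} and α ≥ 1, the empirical lens depth LD̂ built with the sample Fermat distance D_{Q,α} satisfies LD̂(t·u) = LD̂(q*) for all t ≥ T; in particular LD̂ is eventually constant along this ray and does not vanish at infinity unless LD̂(q*) = 0. -/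
open scoped BigOperators

/-- Cost of a path `l = [q₁, …, q_k]`: `Σ_{j} dist q_j q_{j+1} ^ α`. -/
noncomputable def pathCost {E : Type*} [PseudoMetricSpace E] (α : ℝ) (l : List E) : ℝ :=
  ((l.zip l.tail).map fun p => dist p.1 p.2 ^ α).sum

/-- Sample Fermat distance between two points `a b ∈ Q` (as infimum over paths in `Q`
starting at `a` and ending at `b`). -/
noncomputable def sampleFermat {E : Type*} [PseudoMetricSpace E] (Q : Finset E) (α : ℝ)
    (a b : E) : ℝ :=
  sInf { c | ∃ l : List E, (∀ q ∈ l, q ∈ Q) ∧ l.head? = some a ∧ l.getLast? = some b ∧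
    c = pathCost α l }

/-- `q` is the unique nearest point of `Q` to `x`. -/
def IsUniqueNearest {E : Type*} [PseudoMetricSpace E] (Q : Finset E) (x q : E) : Prop :=
  q ∈ Q ∧ ∀ p ∈ Q, p ≠ q → dist x q < dist x p

/-- The nearest point `q_Q(x)` of `Q` to `x` (junk value `x` if there is no unique nearest
point). -/
noncomputable def nearestPt {E : Type*} [PseudoMetricSpace E] (Q : Finset E) (x : E) : E :=
  haveI := Classical.propDecidable (∃ q, IsUniqueNearest Q x q)
  if h : ∃ q, IsUniqueNearest Q x q then h.choose else x

/-- Sample Fermat distance `D_{Q,α}(x,y)` between arbitrary points of the ambient space. -/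
noncomputable def fermatDist {E : Type*} [PseudoMetricSpace E] (Q : Finset E) (α : ℝ)
    (x y : E) : ℝ :=
  sampleFermat Q α (nearestPt Q x) (nearestPt Q y)

/-- Empirical lens depth of `x` w.r.t. sample points `X₁,…,X_n` and distance `dd`. -/
noncomputable def lensDepth {E : Type*} (n : ℕ) (dd : E → E → ℝ) (X : Fin n → E) (x : E) : ℝ :=
  ((n.choose 2 : ℝ))⁻¹ *
    ∑ i : Fin n, ∑ j : Fin n,
      if i < j ∧ max (dd x (X i)) (dd x (X j)) ≤ dd (X i) (X j) then (1 : ℝ) else 0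

/-- Modified sample Fermat distance `D^modif_{Q,α}(x,y)`. -/
noncomputable def modifFermat {E : Type*} [PseudoMetricSpace E] (Q : Finset E) (α : ℝ)
    (x y : E) : ℝ :=
  sInf { c | ∃ q ∈ Q, c = dist x q ^ α + sampleFermat Q α q y }

open scoped RealInnerProductSpace

lemma nearestPt_eq_of_isUniqueNearest {E : Type*} [PseudoMetricSpace E] {Q : Finset E}
    {x q : E} (h : IsUniqueNearest Q x q) : nearestPt Q x = q := by
  have hex : ∃ q, IsUniqueNearest Q x q := ⟨q, h⟩
  unfold nearestPt
  rw [dif_pos hex]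
  obtain ⟨hq', huniq⟩ := hex.choose_spec
  by_contra hne
  have h1 := h.2 _ hq' hne
  have h2 := huniq _ h.1 (Ne.symm hne)
  linarith

lemma isUniqueNearest_self {E : Type*} [MetricSpace E] {Q : Finset E} {q : E}
    (hq : q ∈ Q) : IsUniqueNearest Q q q := by
  refine ⟨hq, fun p hp hne => ?_⟩
  rw [dist_self]
  exact dist_pos.2 (Ne.symm hne)

/-- there is a unit direction `u`, a point `q* ∈ Q` and `T > 0` such that every
point `t • u` with `t ≥ T` has `q*` as unique nearest point in `Q`; consequently the empirical
lens depth with sample Fermat distance is eventually constant (equal to `LD̂(q*)`) along this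
ray, so it does not vanish at infinity unless `LD̂(q*) = 0`. -/
theorem lensDepth_fermatDist_eventually_constant_ray {d n : ℕ} (hd : 0 < d) (hn : 2 ≤ n)
    (X : Fin n → EuclideanSpace ℝ (Fin d)) (hX : Function.Injective X)
    (α : ℝ) (hα : 1 ≤ α) (Q : Finset (EuclideanSpace ℝ (Fin d)))
    (hQ : (Q : Set (EuclideanSpace ℝ (Fin d))) = Set.range X) :
    ∃ (u qstar : EuclideanSpace ℝ (Fin d)) (T : ℝ), ‖u‖ = 1 ∧ qstar ∈ Q ∧ 0 < T ∧
      ∀ t : ℝ, T ≤ t → IsUniqueNearest Q (t • u) qstar ∧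
        lensDepth n (fermatDist Q α) X (t • u) = lensDepth n (fermatDist Q α) X qstar := by
  classical
  have hQne : Q.Nonempty := by
    refine ⟨X ⟨0, by omega⟩, ?_⟩
    rw [← Finset.mem_coe, hQ]
    exact ⟨⟨0, by omega⟩, rfl⟩
  obtain ⟨q0, hq0Q, hq0max⟩ := Finset.exists_max_image Q (fun q => ‖q‖) hQne
  have main : ∃ (u : EuclideanSpace ℝ (Fin d)) (T : ℝ), ‖u‖ = 1 ∧ 0 < T ∧
      ∀ t : ℝ, T ≤ t → IsUniqueNearest Q (t • u) q0 := by
    by_cases h0 : ‖q0‖ = 0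
    · have hQ0 : ∀ p ∈ Q, p = q0 := by
        intro p hp
        have hle := hq0max p hp
        have hp0 : ‖p‖ = 0 := le_antisymm (by simpa [h0] using hle) (norm_nonneg _)
        rw [norm_eq_zero.mp hp0, norm_eq_zero.mp h0]
      refine ⟨EuclideanSpace.single ⟨0, hd⟩ (1 : ℝ), 1, ?_, one_pos, ?_⟩
      · simp [EuclideanSpace.norm_single]
      · intro t _
        exact ⟨hq0Q, fun p hp hne => absurd (hQ0 p hp) hne⟩
    · have hq0pos : 0 < ‖q0‖ := lt_of_le_of_ne (norm_nonneg _) (Ne.symm h0)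
      set u : EuclideanSpace ℝ (Fin d) := ‖q0‖⁻¹ • q0 with hu
      have hunorm : ‖u‖ = 1 := by
        rw [hu, norm_smul, norm_inv, norm_norm, inv_mul_cancel₀ h0]
      have hiq0 : ⟪u, q0⟫ = ‖q0‖ := by
        rw [hu, real_inner_smul_left, real_inner_self_eq_norm_sq]
        field_simp
      have hgap : ∀ p ∈ Q, p ≠ q0 → ⟪u, p⟫ < ‖q0‖ := by
        intro p hp hne
        have hcs : ⟪q0, p⟫ ≤ ‖q0‖ * ‖p‖ := real_inner_le_norm q0 p
        have hple : ‖p‖ ≤ ‖q0‖ := hq0max p hp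
        have hip : ⟪u, p⟫ = ‖q0‖⁻¹ * ⟪q0, p⟫ := by
          rw [hu, real_inner_smul_left]
        rcases lt_or_eq_of_le hcs with hlt | heq
        · calc ⟪u, p⟫ = ‖q0‖⁻¹ * ⟪q0, p⟫ := hip
            _ < ‖q0‖⁻¹ * (‖q0‖ * ‖p‖) := mul_lt_mul_of_pos_left hlt (inv_pos.2 hq0pos)
            _ = ‖p‖ := by field_simp
            _ ≤ ‖q0‖ := hple
        · have hipval : ⟪u, p⟫ = ‖p‖ := by
            rw [hip, heq]
            field_simp
          rcases lt_or_eq_of_le hple with hplt | hpe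
          · rw [hipval]; exact hplt
          · exfalso
            have hpar : ‖p‖ • q0 = ‖q0‖ • p := inner_eq_norm_mul_iff_real.mp heq
            rw [hpe] at hpar
            exact hne (smul_right_injective _ h0 hpar).symm
      by_cases hE : (Q.erase q0).Nonempty
      · set ε : ℝ := (Q.erase q0).inf' hE (fun q => ‖q0‖ - ⟪u, q⟫) with hε
        have hεpos : 0 < ε := by
          rw [hε]
          refine (Finset.lt_inf'_iff hE).2 fun p hp => ?_
          have := hgap p (Finset.mem_of_mem_erase hp) (Finset.ne_of_mem_erase hp)
          linarith
        refine ⟨u, ‖q0‖ ^ 2 / (2 * ε) + 1, hunorm, by positivity, ?_⟩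
        intro t ht
        have htpos : 0 < t := lt_of_lt_of_le (by positivity) ht
        refine ⟨hq0Q, fun p hp hne => ?_⟩
        have hpE : p ∈ Q.erase q0 := Finset.mem_erase.2 ⟨hne, hp⟩
        have hεle : ε ≤ ‖q0‖ - ⟪u, p⟫ := Finset.inf'_le _ hpE
        have hsq : dist (t • u) q0 ^ 2 < dist (t • u) p ^ 2 := by
          have e1 : ⟪t • u, q0⟫ = t * ‖q0‖ := by
            rw [real_inner_smul_left, hiq0]
          have e2 : ⟪t • u, p⟫ = t * ⟪u, p⟫ := real_inner_smul_left u p t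
          rw [dist_eq_norm, dist_eq_norm, norm_sub_sq_real, norm_sub_sq_real,
            e1, e2, norm_smul]
          have hnu : ‖(t : ℝ)‖ * ‖u‖ = t := by
            rw [hunorm, mul_one, Real.norm_eq_abs, abs_of_pos htpos]
          rw [hnu]
          have hTt : ‖q0‖ ^ 2 / (2 * ε) + 1 ≤ t := ht
          have h2εt : ‖q0‖ ^ 2 + 2 * ε ≤ 2 * ε * t := by
            have h' := mul_le_mul_of_nonneg_left hTt (by positivity : (0:ℝ) ≤ 2 * ε)
            calc ‖q0‖ ^ 2 + 2 * ε = 2 * ε * (‖q0‖ ^ 2 / (2 * ε) + 1) := by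
                  field_simp
              _ ≤ 2 * ε * t := h'
          have hpn : (0:ℝ) ≤ ‖p‖ ^ 2 := by positivity
          nlinarith [mul_le_mul_of_nonneg_left hεle (by positivity : (0:ℝ) ≤ 2 * t)]
        exact lt_of_pow_lt_pow_left₀ 2 dist_nonneg hsq
      · refine ⟨u, 1, hunorm, one_pos, fun t _ => ⟨hq0Q, fun p hp hne => ?_⟩⟩
        exact absurd ⟨p, Finset.mem_erase.2 ⟨hne, hp⟩⟩ hE
  obtain ⟨u, T, hunorm, hT, hnear⟩ := main
  refine ⟨u, q0, T, hunorm, hq0Q, hT, fun t ht => ?_⟩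
  have hun := hnear t ht
  refine ⟨hun, ?_⟩
  have h1 : nearestPt Q (t • u) = q0 := nearestPt_eq_of_isUniqueNearest hun
  have h2 : nearestPt Q q0 = q0 := nearestPt_eq_of_isUniqueNearest (isUniqueNearest_self hq0Q)
  have key : ∀ z, fermatDist Q α (t • u) z = fermatDist Q α q0 z := by
    intro z
    unfold fermatDist
    rw [h1, h2]
  unfold lensDepth
  simp only [key]
end

section
/- Let Q = {X_1, …, X_n} be a set of n ≥ 2 pairwise distinct points of ℝ^d and α ≥ 1. Define the empirical lens depth of x ∈ ℝ^d by LD̂(x) := binom(n,2)^{-1} Σ_{1 ≤ i < j ≤ n} 1[max(D^modif_{Q,α}(x, X_i), D^modif_{Q,α}(x, X_j)) ≤ D_{Q,α}(X_i, X_j)]. If dist(x, Q)^α > max_{1 ≤ i < j ≤ n} D_{Q,α}(X_i, X_j), then LD̂(x) = 0. Consequently, LD̂(x) → 0 (indeed LD̂(x) is eventually 0) as dist(x, Q) → ∞: the empirical lens depth with the modified sample Fermat distance vanishes at infinity. -/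
open scoped BigOperators

/-- Empirical lens depth of `x` using the modified sample Fermat distance `D^modif_{Q,α}`
between `x` and the sample points and the sample Fermat distance `D_{Q,α}` between sample
points. -/
noncomputable def lensDepthModif {E : Type*} [PseudoMetricSpace E] (n : ℕ) (Q : Finset E)
    (α : ℝ) (X : Fin n → E) (x : E) : ℝ :=
  ((n.choose 2 : ℝ))⁻¹ *
    ∑ i : Fin n, ∑ j : Fin n,
      if i < j ∧ max (modifFermat Q α x (X i)) (modifFermat Q α x (X j))
          ≤ sampleFermat Q α (X i) (X j) then (1 : ℝ) else 0


lemma pathCost_nonneg {E : Type*} [PseudoMetricSpace E] (α : ℝ) (l : List E) :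
    0 ≤ pathCost α l := by
  apply List.sum_nonneg
  intro c hc
  simp only [List.mem_map] at hc
  obtain ⟨p, _, rfl⟩ := hc
  exact Real.rpow_nonneg dist_nonneg α

lemma sampleFermat_nonneg {E : Type*} [PseudoMetricSpace E] (Q : Finset E) (α : ℝ)
    (a b : E) : 0 ≤ sampleFermat Q α a b := by
  apply Real.sInf_nonneg
  rintro c ⟨l, _, _, _, rfl⟩
  exact pathCost_nonneg α l

lemma modifFermat_ge {E : Type*} [PseudoMetricSpace E] (Q : Finset E) (hQ : Q.Nonempty)
    (α : ℝ) (hα : 0 ≤ α) (x y : E) :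
    Metric.infDist x (Q : Set E) ^ α ≤ modifFermat Q α x y := by
  apply le_csInf
  · obtain ⟨q, hq⟩ := hQ
    exact ⟨_, q, hq, rfl⟩
  · rintro c ⟨q, hq, rfl⟩
    have h1 : Metric.infDist x (Q : Set E) ^ α ≤ dist x q ^ α :=
      Real.rpow_le_rpow Metric.infDist_nonneg (Metric.infDist_le_dist_of_mem hq) hα
    linarith [sampleFermat_nonneg Q α q y]

/-- if `dist(x,Q)^α` exceeds all pairwise sample Fermat distances `D_{Q,α}(Xᵢ,Xⱼ)`
then the empirical lens depth with the modified sample Fermat distance vanishes at `x`;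
consequently, along any sequence going to infinity away from `Q`, `LD̂` is eventually `0` and
tends to `0`: it vanishes at infinity. -/
theorem lensDepthModif_vanishes_at_infinity {d n : ℕ} (hn : 2 ≤ n)
    (X : Fin n → EuclideanSpace ℝ (Fin d)) (hX : Function.Injective X)
    (α : ℝ) (hα : 1 ≤ α) (Q : Finset (EuclideanSpace ℝ (Fin d)))
    (hQ : (Q : Set (EuclideanSpace ℝ (Fin d))) = Set.range X) :
    (∀ x : EuclideanSpace ℝ (Fin d),
      (∀ i j : Fin n, i < j → sampleFermat Q α (X i) (X j)
          < Metric.infDist x (Q : Set (EuclideanSpace ℝ (Fin d))) ^ α) →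
      lensDepthModif n Q α X x = 0) ∧
    ∀ xs : ℕ → EuclideanSpace ℝ (Fin d),
      Filter.Tendsto (fun k => Metric.infDist (xs k) (Q : Set (EuclideanSpace ℝ (Fin d))))
        Filter.atTop Filter.atTop →
      (∀ᶠ k in Filter.atTop, lensDepthModif n Q α X (xs k) = 0) ∧
      Filter.Tendsto (fun k => lensDepthModif n Q α X (xs k)) Filter.atTop (nhds 0)  := by
  have hQne : Q.Nonempty := by
    have : X ⟨0, by omega⟩ ∈ Q := by
      rw [← Finset.mem_coe, hQ]; exact Set.mem_range_self _
    exact ⟨_, this⟩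
  have hα0 : (0:ℝ) ≤ α := le_trans zero_le_one hα
  have main : ∀ x : EuclideanSpace ℝ (Fin d),
      (∀ i j : Fin n, i < j → sampleFermat Q α (X i) (X j)
          < Metric.infDist x (Q : Set (EuclideanSpace ℝ (Fin d))) ^ α) →
      lensDepthModif n Q α X x = 0 := by
    intro x hx
    unfold lensDepthModif
    rw [mul_eq_zero]
    right
    apply Finset.sum_eq_zero
    intro i _
    apply Finset.sum_eq_zero
    intro j _
    rw [if_neg]
    rintro ⟨hij, hmax⟩
    have h1 := hx i j hij
    have h2 := modifFermat_ge Q hQne α hα0 x (X i)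
    have h3 : modifFermat Q α x (X i) ≤ max (modifFermat Q α x (X i)) (modifFermat Q α x (X j)) :=
      le_max_left _ _
    linarith
  refine ⟨main, fun xs hxs => ?_⟩
  -- bound on all pairwise sample Fermat distances
  have hne : (Finset.univ : Finset (Fin n × Fin n)).Nonempty := by
    refine ⟨(⟨0, by omega⟩, ⟨0, by omega⟩), Finset.mem_univ _⟩
  set C : ℝ := Finset.univ.sup' hne (fun p : Fin n × Fin n => sampleFermat Q α (X p.1) (X p.2))
  have hC : ∀ i j : Fin n, sampleFermat Q α (X i) (X j) ≤ C := fun i j =>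
    Finset.le_sup' (f := fun p : Fin n × Fin n => sampleFermat Q α (X p.1) (X p.2)) (Finset.mem_univ (i, j))
  have hev : ∀ᶠ k in Filter.atTop,
      max C 0 + 1 ≤ Metric.infDist (xs k) (Q : Set (EuclideanSpace ℝ (Fin d))) :=
    hxs.eventually_ge_atTop _
  have hev0 : ∀ᶠ k in Filter.atTop, lensDepthModif n Q α X (xs k) = 0 := by
    filter_upwards [hev] with k hk
    apply main
    intro i j _
    set t := Metric.infDist (xs k) (Q : Set (EuclideanSpace ℝ (Fin d)))
    have ht1 : (1:ℝ) ≤ t := by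
      have : (0:ℝ) ≤ max C 0 := le_max_right _ _
      linarith
    have h1 : t ≤ t ^ α := by
      calc t = t ^ (1:ℝ) := (Real.rpow_one t).symm
        _ ≤ t ^ α := Real.rpow_le_rpow_of_exponent_le ht1 hα
    have h2 : C < t := by
      have : C ≤ max C 0 := le_max_left _ _
      linarith
    exact lt_of_le_of_lt (hC i j) (lt_of_lt_of_le h2 h1)
  refine ⟨hev0, ?_⟩
  exact Filter.Tendsto.congr' (by filter_upwards [hev0] with k hk using hk.symm)
    tendsto_const_nhds
end

section
/- Let P be a Borel probability measure on ℝ^d and let the lens depth LD(x, P) be defined with respect to the Euclidean distance. Then LD(x, P) ≤ (P ⊗ P)({(x₁, x₂) : |x − x₁| ≤ |x₁ − x₂|}), and LD(x, P) → 0 as |x| → ∞; i.e. the (Euclidean) lens depth vanishes at infinity for every probability measure on ℝ^d. -/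
open scoped BigOperators

open MeasureTheory in
/-- for any Borel probability measure `P` on `ℝ^d`, the (Euclidean) lens depth
`LD(x,P)` is bounded by `(P ⊗ P){(x₁,x₂) : |x − x₁| ≤ |x₁ − x₂|}` and vanishes at infinity:
`LD(x,P) → 0` as `|x| → ∞`. -/
theorem lensDepth_vanishes_at_infinity {d : ℕ}
    (P : Measure (EuclideanSpace ℝ (Fin d))) [IsProbabilityMeasure P] :
    (∀ x : EuclideanSpace ℝ (Fin d),
      ((P.prod P) {p : EuclideanSpace ℝ (Fin d) × EuclideanSpace ℝ (Fin d) |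
          max (dist x p.1) (dist x p.2) ≤ dist p.1 p.2}).toReal
        ≤ ((P.prod P) {p : EuclideanSpace ℝ (Fin d) × EuclideanSpace ℝ (Fin d) |
          dist x p.1 ≤ dist p.1 p.2}).toReal) ∧
    Filter.Tendsto
      (fun x : EuclideanSpace ℝ (Fin d) =>
        ((P.prod P) {p : EuclideanSpace ℝ (Fin d) × EuclideanSpace ℝ (Fin d) |
          max (dist x p.1) (dist x p.2) ≤ dist p.1 p.2}).toReal)
      (Filter.comap (fun x : EuclideanSpace ℝ (Fin d) => ‖x‖) Filter.atTop) (nhds 0) := by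
  classical
  constructor
  · intro x
    refine ENNReal.toReal_mono (measure_ne_top _ _) (measure_mono fun p hp => ?_)
    simp only [Set.mem_setOf_eq] at hp ⊢
    exact le_trans (le_max_left _ _) hp
  · rw [Metric.tendsto_nhds]
    intro ε hε
    -- choose n with P((closedBall 0 n)ᶜ) < ε/2
    have hiInter : ⋂ n : ℕ, (Metric.closedBall (0 : EuclideanSpace ℝ (Fin d)) n)ᶜ = ∅ := by
      ext y
      simp only [Set.mem_iInter, Set.mem_compl_iff, Metric.mem_closedBall, Set.mem_empty_iff_false,
        iff_false, not_forall, not_not]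
      obtain ⟨n, hn⟩ := exists_nat_ge (dist y (0 : EuclideanSpace ℝ (Fin d)))
      exact ⟨n, hn⟩
    have hten : Filter.Tendsto
        (fun n : ℕ => P ((Metric.closedBall (0 : EuclideanSpace ℝ (Fin d)) n)ᶜ))
        Filter.atTop (nhds 0) := by
      have h := MeasureTheory.tendsto_measure_iInter_atTop (μ := P)
        (s := fun n : ℕ => (Metric.closedBall (0 : EuclideanSpace ℝ (Fin d)) n)ᶜ)
        (fun n => measurableSet_closedBall.compl.nullMeasurableSet)
        (fun m n hmn => Set.compl_subset_compl.2 (Metric.closedBall_subset_closedBall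
          (by exact_mod_cast hmn)))
        ⟨0, measure_ne_top _ _⟩
      rw [hiInter, measure_empty] at h
      exact h
    have hε2 : (0 : ENNReal) < ENNReal.ofReal (ε / 2) := ENNReal.ofReal_pos.2 (by linarith)
    obtain ⟨n, hn⟩ := (hten.eventually (gt_mem_nhds hε2)).exists
    set A := (Metric.closedBall (0 : EuclideanSpace ℝ (Fin d)) n)ᶜ with hA
    rw [Filter.eventually_comap]
    filter_upwards [Filter.eventually_ge_atTop (3 * (n : ℝ) + 1)] with b hb x hx
    have hxnorm : 3 * (n : ℝ) + 1 ≤ ‖x‖ := hx ▸ hb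
    rw [Real.dist_eq, sub_zero, abs_of_nonneg ENNReal.toReal_nonneg]
    refine ENNReal.toReal_lt_of_lt_ofReal ?_
    have hsub : {p : EuclideanSpace ℝ (Fin d) × EuclideanSpace ℝ (Fin d) |
        max (dist x p.1) (dist x p.2) ≤ dist p.1 p.2} ⊆
        (A ×ˢ Set.univ) ∪ (Set.univ ×ˢ A) := by
      intro p hp
      simp only [Set.mem_union, Set.mem_prod, Set.mem_univ, and_true, true_and, hA,
        Set.mem_compl_iff, Metric.mem_closedBall]
      by_contra hcon
      push_neg at hcon
      obtain ⟨h1, h2⟩ := hcon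
      have hmax : max (dist x p.1) (dist x p.2) ≤ dist p.1 p.2 := hp
      have h12 : dist p.1 p.2 ≤ 2 * n := by
        have := dist_triangle p.1 (0 : EuclideanSpace ℝ (Fin d)) p.2
        have h2' : dist (0 : EuclideanSpace ℝ (Fin d)) p.2 ≤ n := by
          rw [dist_comm]; exact h2
        linarith
      have hx1 : 2 * (n : ℝ) + 1 ≤ dist x p.1 := by
        have := dist_triangle x p.1 (0 : EuclideanSpace ℝ (Fin d))
        have hx0 : dist x (0 : EuclideanSpace ℝ (Fin d)) = ‖x‖ := dist_zero_right x
        have h1' : dist p.1 (0 : EuclideanSpace ℝ (Fin d)) ≤ n := h1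
        linarith
      have := le_trans (le_max_left _ _) hmax
      linarith
    calc (P.prod P) {p : EuclideanSpace ℝ (Fin d) × EuclideanSpace ℝ (Fin d) |
          max (dist x p.1) (dist x p.2) ≤ dist p.1 p.2}
        ≤ (P.prod P) (A ×ˢ Set.univ) + (P.prod P) (Set.univ ×ˢ A) :=
          le_trans (measure_mono hsub) (measure_union_le _ _)
      _ = P A + P A := by
          rw [Measure.prod_prod, Measure.prod_prod, measure_univ, mul_one, one_mul]
      _ < ENNReal.ofReal (ε / 2) + ENNReal.ofReal (ε / 2) := ENNReal.add_lt_add hn hn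
      _ = ENNReal.ofReal ε := by
          rw [← ENNReal.ofReal_add (by linarith) (by linarith)]
          norm_num
end
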